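/- Every star-shaped (around the origin) open subset V of ℝ^n is diffeomorphic to ℝ^n; moreover an explicit diffeomorphism is given by v ↦ (1 + (∫₀^{‖v‖} dt/φ(t·v/‖v‖))²) · v (and 0 ↦ 0), where φ : ℝ^n → ℝ_{≥0} is any smooth function with φ^{-1}(0) = ℝ^n \ V. -/

import Mathlib

set_option maxHeartbeats 1000000
set_option synthInstance.maxHeartbeats 400000
open Set MeasureTheory Metric

theorem param_aux {E : Type} [NormedAddCommGroup E] [NormedSpace ℝ E]
    {W : Set (E × ℝ)} (hW : IsOpen W) {x₀ : E}
    (hx : ∀ s ∈ Icc (0:ℝ) 1, (x₀, s) ∈ W) :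
    ∃ r > 0, (Metric.closedBall x₀ r) ×ˢ (Icc (0:ℝ) 1) ⊆ W := by
  have hK : IsCompact (({x₀} : Set E) ×ˢ Icc (0:ℝ) 1) :=
    isCompact_singleton.prod isCompact_Icc
  have hKW : ({x₀} : Set E) ×ˢ Icc (0:ℝ) 1 ⊆ W := by
    rintro ⟨x, s⟩ ⟨hx1, hs⟩
    rcases hx1 with rfl
    exact hx s hs
  obtain ⟨δ, hδ, hsub⟩ := hK.exists_thickening_subset_open hW hKW
  refine ⟨δ/2, by positivity, fun p hp => hsub ?_⟩
  rw [Metric.mem_thickening_iff]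
  refine ⟨(x₀, p.2), ⟨rfl, hp.2⟩, ?_⟩
  have : dist p (x₀, p.2) = dist p.1 x₀ := by
    simp [Prod.dist_eq, dist_nonneg]
  rw [this]
  exact lt_of_le_of_lt (mem_closedBall.1 hp.1) (by linarith)

theorem contDiffOn_param_integral
    {E : Type} [NormedAddCommGroup E] [NormedSpace ℝ E] [FiniteDimensional ℝ E] (k : ℕ) :
    ∀ {F : Type} [NormedAddCommGroup F] [NormedSpace ℝ F]
      (ψ : E × ℝ → F) (W : Set (E × ℝ)), IsOpen W → ContDiffOn ℝ (⊤:ℕ∞) ψ W →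
      ∀ (U : Set E), IsOpen U → (∀ x ∈ U, ∀ s ∈ Icc (0:ℝ) 1, (x, s) ∈ W) →
      ContDiffOn ℝ (k : WithTop ℕ∞) (fun x => ∫ s in (0:ℝ)..1, ψ (x, s)) U := by
  induction k with
  | zero =>
    intro F _ _ ψ W hW hψ U hU hUW
    rw [Nat.cast_zero, contDiffOn_zero]
    intro x₀ hx₀
    apply ContinuousAt.continuousWithinAt
    obtain ⟨r, hr, hsub⟩ := param_aux hW (hUW x₀ hx₀)
    obtain ⟨C, hC⟩ := ((isCompact_closedBall x₀ r).prod isCompact_Icc).exists_bound_of_continuousOn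
        (hψ.continuousOn.mono hsub)
    have hmem : ∀ x ∈ closedBall x₀ r, ∀ t ∈ Set.uIoc (0:ℝ) 1, (x, t) ∈ W := fun x hx t ht =>
      hsub ⟨hx, Ioc_subset_Icc_self (by rwa [uIoc_of_le zero_le_one] at ht)⟩
    apply intervalIntegral.continuousAt_of_dominated_interval (bound := fun _ => C)
    · filter_upwards [closedBall_mem_nhds x₀ hr] with x hx
      refine ContinuousOn.aestronglyMeasurable (fun t ht => ?_) measurableSet_uIoc
      exact ((hψ.continuousOn.continuousAt (hW.mem_nhds (hmem x hx t ht))).comp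
        ((continuous_const.prodMk continuous_id).continuousAt)).continuousWithinAt
    · filter_upwards [closedBall_mem_nhds x₀ hr] with x hx
      exact ae_of_all _ fun t ht => hC (x, t)
        ⟨hx, Ioc_subset_Icc_self (by rwa [uIoc_of_le zero_le_one] at ht)⟩
    · exact intervalIntegrable_const
    · refine ae_of_all _ fun t ht => ?_
      have h1 : ContinuousAt (fun x : E => (x, t)) x₀ :=
        (continuous_id.prodMk continuous_const).continuousAt
      exact ContinuousAt.comp (hψ.continuousOn.continuousAt
        (hW.mem_nhds (hmem x₀ (mem_closedBall_self hr.le) t ht))) h1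
  | succ k ih =>
    intro F _ _ ψ W hW hψ U hU hUW
    set L : ((E × ℝ) →L[ℝ] F) →L[ℝ] (E →L[ℝ] F) :=
      (ContinuousLinearMap.compL ℝ E (E × ℝ) F).flip (ContinuousLinearMap.inl ℝ E ℝ) with hL
    set ψ₁ : E × ℝ → (E →L[ℝ] F) := fun p => L (fderiv ℝ ψ p) with hψ₁def
    have hψ₁ : ContDiffOn ℝ (⊤:ℕ∞) ψ₁ W :=
      L.contDiff.comp_contDiffOn (hψ.fderiv_of_isOpen hW (by simp))
    have hpart : ∀ x t, (x, t) ∈ W → HasFDerivAt (fun y => ψ (y, t)) (ψ₁ (x, t)) x := by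
      intro x t hxt
      have hd : DifferentiableAt ℝ ψ (x, t) :=
        (hψ.contDiffAt (hW.mem_nhds hxt)).differentiableAt (by simp)
      exact hd.hasFDerivAt.comp x (hasFDerivAt_prodMk_left x t)
    have key : ∀ x₀ ∈ U, HasFDerivAt (fun x => ∫ s in (0:ℝ)..1, ψ (x, s))
        (∫ s in (0:ℝ)..1, ψ₁ (x₀, s)) x₀ := by
      intro x₀ hx₀
      obtain ⟨r, hr, hsub⟩ := param_aux hW (hUW x₀ hx₀)
      obtain ⟨C, hC⟩ :=
        ((isCompact_closedBall x₀ r).prod isCompact_Icc).exists_bound_of_continuousOn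
          (hψ₁.continuousOn.mono hsub)
      have hmem : ∀ x ∈ closedBall x₀ r, ∀ t ∈ Set.uIoc (0:ℝ) 1, (x, t) ∈ W := fun x hx t ht =>
        hsub ⟨hx, Ioc_subset_Icc_self (by rwa [uIoc_of_le zero_le_one] at ht)⟩
      apply intervalIntegral.hasFDerivAt_integral_of_dominated_of_fderiv_le
        (F' := fun x t => ψ₁ (x, t)) (bound := fun _ => C) (ball_mem_nhds x₀ hr)
      · filter_upwards [closedBall_mem_nhds x₀ hr] with x hx
        refine ContinuousOn.aestronglyMeasurable (fun t ht => ?_) measurableSet_uIoc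
        exact ((hψ.continuousOn.continuousAt (hW.mem_nhds (hmem x hx t ht))).comp
          ((continuous_const.prodMk continuous_id).continuousAt)).continuousWithinAt
      · refine ContinuousOn.intervalIntegrable (fun t ht => ?_)
        rw [uIcc_of_le zero_le_one] at ht
        exact ((hψ.continuousOn.continuousAt
          (hW.mem_nhds (hsub ⟨mem_closedBall_self hr.le, ht⟩))).comp
          ((continuous_const.prodMk continuous_id).continuousAt)).continuousWithinAt
      · refine ContinuousOn.aestronglyMeasurable (fun t ht => ?_) measurableSet_uIoc
        exact ((hψ₁.continuousOn.continuousAt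
          (hW.mem_nhds (hmem x₀ (mem_closedBall_self hr.le) t ht))).comp
          ((continuous_const.prodMk continuous_id).continuousAt)).continuousWithinAt
      · refine ae_of_all _ fun t ht x hx => ?_
        exact hC (x, t) ⟨ball_subset_closedBall hx,
          Ioc_subset_Icc_self (by rwa [uIoc_of_le zero_le_one] at ht)⟩
      · exact intervalIntegrable_const
      · refine ae_of_all _ fun t ht x hx => ?_
        exact hpart x t (hmem x (ball_subset_closedBall hx) t ht)
    have hcast : ((k + 1 : ℕ) : WithTop ℕ∞) = (k : WithTop ℕ∞) + 1 := by exact_mod_cast rfl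
    rw [hcast, contDiffOn_succ_iff_fderiv_of_isOpen hU]
    refine ⟨fun x hx => ((key x hx).differentiableAt).differentiableWithinAt,
      fun h => absurd h (by simp), ?_⟩
    exact (ih ψ₁ W hW hψ₁ U hU hUW).congr fun x hx => ((key x hx).fderiv)

open Filter in
theorem deriv_nonneg_of_monotoneOn {Q : ℝ → ℝ} {a b x d : ℝ} (hax : a < x) (hxb : x < b)
    (hm : MonotoneOn Q (Icc a b)) (hd : HasDerivAt Q d x) : 0 ≤ d := by
  have h1 : Tendsto (slope Q x) (nhdsWithin x (Ioi x)) (nhds d) :=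
    (hasDerivAt_iff_tendsto_slope.1 hd).mono_left
      (nhdsWithin_mono x (fun y hy => ne_of_gt hy))
  refine ge_of_tendsto h1 ?_
  filter_upwards [Ioo_mem_nhdsGT_of_mem ⟨le_refl x, hxb⟩] with y hy
  rw [slope_def_field]
  apply div_nonneg _ (by linarith [hy.1] : (0:ℝ) ≤ y - x)
  have hQle : Q x ≤ Q y :=
    hm ⟨hax.le, hxb.le⟩ ⟨(hax.trans hy.1).le, hy.2.le⟩ hy.1.le
  linarith

theorem main_general
    {E : Type} [NormedAddCommGroup E] [InnerProductSpace ℝ E] [FiniteDimensional ℝ E]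
    (V : Set E) (hVopen : IsOpen V) (h0 : (0 : E) ∈ V)
    (hstar : ∀ v ∈ V, ∀ t : ℝ, t ∈ Icc (0 : ℝ) 1 → t • v ∈ V)
    (φ : E → ℝ) (hφ : ContDiff ℝ (⊤ : ℕ∞) φ)
    (hφnn : ∀ x, 0 ≤ φ x) (hφ0 : ∀ x, φ x = 0 ↔ x ∉ V) :
    ContDiffOn ℝ (⊤ : ℕ∞)
      (fun v => (1 + (∫ t in (0 : ℝ)..‖v‖, (φ ((t / ‖v‖) • v))⁻¹) ^ 2) • v) V ∧
    Set.BijOn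
      (fun v => (1 + (∫ t in (0 : ℝ)..‖v‖, (φ ((t / ‖v‖) • v))⁻¹) ^ 2) • v) V Set.univ ∧
    ∃ g' : E → E,
      ContDiff ℝ (⊤ : ℕ∞) g' ∧ (∀ y, g' y ∈ V) ∧
      (∀ v ∈ V,
        g' ((1 + (∫ t in (0 : ℝ)..‖v‖, (φ ((t / ‖v‖) • v))⁻¹) ^ 2) • v) = v) ∧
      (∀ y, (1 + (∫ t in (0 : ℝ)..‖g' y‖, (φ ((t / ‖g' y‖) • g' y))⁻¹) ^ 2) • g' y = y) := by
  classical
  set G : E → ℝ := fun v => ∫ s in (0:ℝ)..1, (φ (s • v))⁻¹ with hGdef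
  set J : E → ℝ → ℝ := fun u r => ∫ t in (0:ℝ)..r, (φ (t • u))⁻¹ with hJdef
  set q : E → ℝ := fun v => ‖v‖^2 * (G v)^2 with hqdef
  set f : E → E := fun v => (1 + q v) • v with hfdef
  -- positivity of φ on V
  have hφpos : ∀ x ∈ V, 0 < φ x := fun x hx =>
    (hφnn x).lt_of_ne' (fun h => (hφ0 x).1 h hx)
  -- smoothness of G on V
  have hG : ContDiffOn ℝ (⊤ : ℕ∞) G V := by
    refine contDiffOn_infty.2 fun k => ?_
    have hWopen : IsOpen ((fun p : E × ℝ => p.2 • p.1) ⁻¹' V) :=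
      hVopen.preimage (continuous_snd.smul continuous_fst)
    have hψ : ContDiffOn ℝ (⊤:ℕ∞) (fun p : E × ℝ => (φ (p.2 • p.1))⁻¹)
        ((fun p : E × ℝ => p.2 • p.1) ⁻¹' V) := by
      apply ContDiffOn.inv
      · exact (hφ.comp (contDiff_snd.smul contDiff_fst)).contDiffOn
      · exact fun p hp => (hφpos _ hp).ne'
    have h2 := contDiffOn_param_integral k (fun p : E × ℝ => (φ (p.2 • p.1))⁻¹) _
      hWopen hψ V hVopen (fun x hx s hs => by simpa using hstar x hx s hs)
    simpa [hGdef] using h2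
  -- key identity
  have hkey : ∀ v : E, v ≠ 0 → ‖v‖ * G v = J (‖v‖⁻¹ • v) ‖v‖ := by
    intro v hv
    have hnv : ‖v‖ ≠ 0 := norm_ne_zero_iff.2 hv
    have h1 : (fun t : ℝ => (φ (t • (‖v‖⁻¹ • v)))⁻¹)
        = fun t : ℝ => (fun s : ℝ => (φ (s • v))⁻¹) (t / ‖v‖) := by
      funext t
      rw [smul_smul, div_eq_mul_inv]
    have h2 := intervalIntegral.integral_comp_div (a := 0) (b := ‖v‖)
      (f := fun s : ℝ => (φ (s • v))⁻¹) hnv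
    simp only [hJdef, hGdef]
    rw [h1, h2, zero_div, div_self hnv, smul_eq_mul]
  -- the statement function equals f
  have hFeq : ∀ w : E,
      (1 + (∫ t in (0 : ℝ)..‖w‖, (φ ((t / ‖w‖) • w))⁻¹) ^ 2) • w = f w := by
    intro w
    by_cases hw : w = 0
    · simp [hw, hfdef]
    · have hnw : ‖w‖ ≠ 0 := norm_ne_zero_iff.2 hw
      have hc : (∫ t in (0:ℝ)..‖w‖, (φ ((t / ‖w‖) • w))⁻¹) = J (‖w‖⁻¹ • w) ‖w‖ := by
        simp only [hJdef]
        apply intervalIntegral.integral_congr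
        intro t _
        simp only [smul_smul, div_eq_mul_inv]
      rw [hc, ← hkey w hw, hfdef]
      simp only [hqdef]
      rw [mul_pow]
  have hqnn : ∀ v, 0 ≤ q v := fun v => by positivity
  have hqJ : ∀ v : E, v ≠ 0 → q v = (J (‖v‖⁻¹ • v) ‖v‖)^2 := by
    intro v hv
    simp only [hqdef]
    rw [← mul_pow, hkey v hv]
  have hq0 : q 0 = 0 := by simp [hqdef]
  -- J facts
  have hmemIcc : ∀ (u : E) (r : ℝ), r • u ∈ V → ∀ t ∈ Icc (0:ℝ) r, t • u ∈ V := by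
    intro u r hru t ht
    rcases eq_or_lt_of_le ht.1 with rfl | htpos
    · simpa using h0
    · have hr : 0 < r := lt_of_lt_of_le htpos ht.2
      have := hstar _ hru (t/r) ⟨by positivity, by rw [div_le_one hr]; exact ht.2⟩
      rwa [smul_smul, div_mul_cancel₀ _ hr.ne'] at this
  have hJcont : ∀ (u : E) (r : ℝ), (∀ t ∈ Icc (0:ℝ) r, t • u ∈ V) →
      ContinuousOn (fun t => (φ (t • u))⁻¹) (Icc 0 r) := by
    intro u r h
    have hc : ContinuousOn (fun t : ℝ => φ (t • u)) (Icc 0 r) :=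
      (hφ.continuous.comp (continuous_id.smul continuous_const)).continuousOn
    exact hc.inv₀ fun t ht => (hφpos _ (h t ht)).ne'
  have hJmono : ∀ (u : E) (a b : ℝ), 0 ≤ a → a ≤ b → (∀ t ∈ Icc (0:ℝ) b, t • u ∈ V) →
      J u a ≤ J u b := by
    intro u a b ha hab h
    have hca : IntervalIntegrable (fun t => (φ (t • u))⁻¹) MeasureTheory.volume 0 a :=
      ContinuousOn.intervalIntegrable ((hJcont u b h).mono
        (by rw [uIcc_of_le ha]; exact Icc_subset_Icc le_rfl hab))
    have hcb : IntervalIntegrable (fun t => (φ (t • u))⁻¹) MeasureTheory.volume a b :=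
      ContinuousOn.intervalIntegrable ((hJcont u b h).mono
        (by rw [uIcc_of_le hab]; exact Icc_subset_Icc ha le_rfl))
    have hadd := intervalIntegral.integral_add_adjacent_intervals hca hcb
    have hpos : 0 ≤ ∫ t in a..b, (φ (t • u))⁻¹ :=
      intervalIntegral.integral_nonneg hab (fun t _ => inv_nonneg.2 (hφnn _))
    simp only [hJdef]
    rw [← hadd]
    linarith
  have hJnonneg : ∀ (u : E) (r : ℝ), 0 ≤ r → (∀ t ∈ Icc (0:ℝ) r, t • u ∈ V) → 0 ≤ J u r := by
    intro u r hr h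
    have := hJmono u 0 r le_rfl hr h
    simpa [hJdef] using this
  -- smoothness of f on V
  have hqV : ContDiffOn ℝ (⊤ : ℕ∞) q V := by
    simp only [hqdef]
    exact ((contDiff_norm_sq ℝ).contDiffOn).mul (hG.pow 2)
  have hfV : ContDiffOn ℝ (⊤ : ℕ∞) f V := by
    rw [hfdef]
    apply ContDiffOn.smul ?_ contDiffOn_id
    exact ContDiffOn.add contDiffOn_const hqV
  -- injectivity
  have hf0 : ∀ x : E, f x = 0 ↔ x = 0 := by
    intro x
    rw [hfdef]
    simp only [smul_eq_zero]
    constructor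
    · rintro (h | h)
      · exact absurd h (by have := hqnn x; intro hc; nlinarith)
      · exact h
    · exact fun h => Or.inr h
  have hInj : Set.InjOn f V := by
    have main : ∀ v ∈ V, ∀ w ∈ V, v ≠ 0 → w ≠ 0 → f v = f w →
        (1 + q v) / (1 + q w) ≤ 1 → v = w := by
      intro v hv w hw hv0 hw0 hvw hc1
      have hav : (0:ℝ) < 1 + q v := by have := hqnn v; linarith
      have haw : (0:ℝ) < 1 + q w := by have := hqnn w; linarith
      set c : ℝ := (1 + q v) / (1 + q w) with hcdef
      have hcpos : 0 < c := by positivity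
      have hwc : w = c • v := by
        have hvw' : (1 + q v) • v = (1 + q w) • w := hvw
        calc w = ((1 + q w)⁻¹ * (1 + q w)) • w := by
                rw [inv_mul_cancel₀ haw.ne', one_smul]
          _ = (1 + q w)⁻¹ • ((1 + q w) • w) := by rw [mul_smul]
          _ = (1 + q w)⁻¹ • ((1 + q v) • v) := by rw [← hvw']
          _ = c • v := by rw [smul_smul, hcdef, div_eq_inv_mul]
      have hnv : (0:ℝ) < ‖v‖ := norm_pos_iff.2 hv0
      set u : E := ‖v‖⁻¹ • v with hudef
      have hvu : ‖v‖ • u = v := by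
        rw [hudef, smul_smul, mul_inv_cancel₀ hnv.ne', one_smul]
      have hmemv : ∀ t ∈ Icc (0:ℝ) ‖v‖, t • u ∈ V :=
        hmemIcc u ‖v‖ (by rw [hvu]; exact hv)
      have hnw : ‖w‖ = c * ‖v‖ := by
        rw [hwc, norm_smul, Real.norm_eq_abs, abs_of_pos hcpos]
      have huw : ‖w‖⁻¹ • w = u := by
        rw [hnw, hwc, smul_smul, mul_inv, hudef]
        congr 1
        field_simp
      have hqw : q w = (J u (c * ‖v‖))^2 := by
        rw [hqJ w hw0, huw, hnw]
      have hqv : q v = (J u ‖v‖)^2 := by rw [hqJ v hv0, ← hudef]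
      have hcv : c * ‖v‖ ≤ ‖v‖ := by
        nlinarith
      have hJmono' : J u (c * ‖v‖) ≤ J u ‖v‖ :=
        hJmono u (c * ‖v‖) ‖v‖ (by positivity) hcv hmemv
      have hJnn : 0 ≤ J u (c * ‖v‖) :=
        hJnonneg u (c * ‖v‖) (by positivity)
          (fun t ht => hmemv t ⟨ht.1, ht.2.trans hcv⟩)
      have hqle : q w ≤ q v := by
        rw [hqw, hqv]
        exact pow_le_pow_left₀ hJnn hJmono' 2
      have hc1' : 1 ≤ c := by
        rw [hcdef, le_div_iff₀ haw]
        linarith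
      have hceq : c = 1 := le_antisymm hc1 hc1'
      rw [hwc, hceq, one_smul]
    intro v hv w hw hvw
    by_cases hv0 : v = 0
    · have : f w = 0 := by rw [← hvw, hv0, (hf0 0).2 rfl]
      rw [hv0, ((hf0 w).1 this)]
    · by_cases hw0 : w = 0
      · exact absurd ((hf0 v).1 (by rw [hvw, hw0, (hf0 0).2 rfl])) hv0
      · rcases le_total ((1 + q v) / (1 + q w)) 1 with h | h
        · exact main v hv w hw hv0 hw0 hvw h
        · refine (main w hw v hv hw0 hv0 hvw.symm ?_).symm
          have hav : (0:ℝ) < 1 + q v := by have := hqnn v; linarith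
          have haw : (0:ℝ) < 1 + q w := by have := hqnn w; linarith
          rw [div_le_one hav]
          rw [le_div_iff₀ haw] at h
          linarith
  -- surjectivity
  have hJIcc : ∀ (u : E) (rs : ℝ), 0 ≤ rs → (∀ t ∈ Icc (0:ℝ) rs, t • u ∈ V) →
      ContinuousOn (fun r => (1 + (J u r)^2) * r) (Icc 0 rs) := by
    intro u rs hrs h
    have hint : MeasureTheory.IntegrableOn (fun t => (φ (t • u))⁻¹) (Icc 0 rs) :=
      (hJcont u rs h).integrableOn_Icc
    have hJc : ContinuousOn (fun r => J u r) (Icc 0 rs) := by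
      simp only [hJdef]
      have h2 : MeasureTheory.IntegrableOn (fun t => (φ (t • u))⁻¹)
          (uIcc (0:ℝ) rs) MeasureTheory.volume := by rwa [uIcc_of_le hrs]
      have h3 := intervalIntegral.continuousOn_primitive_interval h2
      rwa [uIcc_of_le hrs] at h3
    exact (continuousOn_const.add (hJc.pow 2)).mul continuousOn_id
  have hSurj : ∀ y : E, ∃ v ∈ V, f v = y := by
    intro y
    by_cases hy : y = 0
    · exact ⟨0, h0, by simp [hfdef, hy]⟩
    have hny : (0:ℝ) < ‖y‖ := norm_pos_iff.2 hy
    set u : E := ‖y‖⁻¹ • y with hudef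
    have hu : ‖u‖ = 1 := by
      rw [hudef, norm_smul, Real.norm_eq_abs, abs_of_pos (by positivity), inv_mul_cancel₀ hny.ne']
    have hbig : ∃ rs : ℝ, 0 ≤ rs ∧ rs • u ∈ V ∧ ‖y‖ ≤ (1 + (J u rs)^2) * rs := by
      set A : Set ℝ := {r | 0 ≤ r ∧ r • u ∈ V} with hAdef
      have hA0 : (0:ℝ) ∈ A := ⟨le_rfl, by simpa using h0⟩
      by_cases hbdd : BddAbove A
      · set R := sSup A with hRdef
        have hRge : 0 ≤ R := le_csSup hbdd hA0
        obtain ⟨ε, hε, hball⟩ := Metric.isOpen_iff.1 hVopen 0 h0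
        have hmemball : (ε/2) • u ∈ V := by
          apply hball
          rw [Metric.mem_ball, dist_zero_right, norm_smul, hu, mul_one, Real.norm_eq_abs,
            abs_of_pos (by positivity)]
          linarith
        have hRpos : 0 < R :=
          lt_of_lt_of_le (by positivity) (le_csSup hbdd ⟨by positivity, hmemball⟩)
        have hIco : ∀ r, 0 ≤ r → r < R → r • u ∈ V := by
          intro r h0r hrR
          obtain ⟨a, haA, hra⟩ := exists_lt_of_lt_csSup ⟨0, hA0⟩ hrR
          exact hmemIcc u a haA.2 r ⟨h0r, hra.le⟩
        have hRnot : R • u ∉ V := by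
          intro hmem
          obtain ⟨ε', hε', hball'⟩ := Metric.isOpen_iff.1 hVopen _ hmem
          have hmem2 : (R + ε'/2) • u ∈ V := by
            apply hball'
            rw [Metric.mem_ball, dist_eq_norm, ← sub_smul, norm_smul, hu, mul_one,
              Real.norm_eq_abs]
            rw [show R + ε'/2 - R = ε'/2 by ring, abs_of_pos (by positivity)]
            linarith
          have := le_csSup hbdd (show R + ε'/2 ∈ A from ⟨by positivity, hmem2⟩)
          linarith
        have hφR : φ (R • u) = 0 := (hφ0 _).2 hRnot
        set g : ℝ → ℝ := fun t => φ (t • u) with hgdef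
        have hgc : ContDiff ℝ (⊤:ℕ∞) g := hφ.comp (contDiff_id.smul contDiff_const)
        have hgd : Continuous (deriv g) := hgc.continuous_deriv (by
          exact_mod_cast (WithTop.coe_le_coe.2 le_top))
        obtain ⟨C0, hC0⟩ := (isCompact_Icc (a := (0:ℝ)) (b := R)).exists_bound_of_continuousOn
          hgd.continuousOn
        set C := max C0 1 with hCdef
        have hCpos : (0:ℝ) < C := lt_of_lt_of_le one_pos (le_max_right _ _)
        have hlip : ∀ t ∈ Icc (0:ℝ) R, φ (t • u) ≤ C * (R - t) := by
          intro t ht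
          rcases eq_or_lt_of_le ht.2 with hEq | htR
          · rw [hEq, hφR]
            simp
          · have hdiff : DifferentiableOn ℝ g (Icc t R) :=
              (hgc.differentiable (by simp)).differentiableOn
            have hbd : ∀ x ∈ Ico t R, ‖derivWithin g (Icc t R) x‖ ≤ C := by
              intro x hx
              rw [DifferentiableAt.derivWithin
                ((hgc.differentiable (by simp)) x)
                ((uniqueDiffOn_Icc htR) x ⟨hx.1, hx.2.le⟩)]
              exact le_trans (hC0 _ ⟨le_trans ht.1 hx.1, hx.2.le⟩) (le_max_left _ _)
            have hest := norm_image_sub_le_of_norm_deriv_le_segment hdiff hbd R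
              (right_mem_Icc.2 ht.2)
            rw [hgdef] at hest
            simp only [hφR, zero_sub, norm_neg, Real.norm_eq_abs] at hest
            calc φ (t • u) ≤ |φ (t • u)| := le_abs_self _
              _ ≤ C * (R - t) := hest
        have hJlb : ∀ r, 0 ≤ r → r < R → Real.log (R / (R - r)) / C ≤ J u r := by
          intro r h0r hrR
          have hmemr : ∀ t ∈ Icc (0:ℝ) r, t • u ∈ V :=
            hmemIcc u r (hIco r h0r hrR)
          have hile : ∀ t ∈ Icc (0:ℝ) r, (C * (R - t))⁻¹ ≤ (φ (t • u))⁻¹ := by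
            intro t ht
            have htR : t < R := lt_of_le_of_lt ht.2 hrR
            have h1 : 0 < φ (t • u) := hφpos _ (hmemr t ht)
            exact inv_anti₀ h1 (hlip t ⟨ht.1, htR.le⟩)
          have hint1 : IntervalIntegrable (fun t => (φ (t • u))⁻¹) MeasureTheory.volume 0 r :=
            ContinuousOn.intervalIntegrable (by rw [uIcc_of_le h0r]; exact hJcont u r hmemr)
          have hint2 : IntervalIntegrable (fun t => (C * (R - t))⁻¹) MeasureTheory.volume 0 r := by
            apply ContinuousOn.intervalIntegrable
            apply ContinuousOn.inv₀
            · exact (continuous_const.mul (continuous_const.sub continuous_id)).continuousOn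
            · intro t ht
              rw [uIcc_of_le h0r] at ht
              have h5 : t < R := lt_of_le_of_lt ht.2 hrR
              exact (mul_pos hCpos (by linarith)).ne'
          have hmono := intervalIntegral.integral_mono_on h0r hint2 hint1 hile
          have hval : (∫ t in (0:ℝ)..r, (C * (R - t))⁻¹) = Real.log (R / (R - r)) / C := by
            have heq : ∀ t : ℝ, (C * (R - t))⁻¹ = C⁻¹ * (R - t)⁻¹ := fun t => by rw [mul_inv]
            simp_rw [heq]
            rw [intervalIntegral.integral_const_mul]
            have hcomp := intervalIntegral.integral_comp_sub_left (a := (0:ℝ)) (b := r)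
              (fun x : ℝ => x⁻¹) R
            rw [hcomp, integral_inv (by
              rw [uIcc_of_le (by linarith : R - r ≤ R - 0)]
              rintro ⟨h1, h2⟩
              linarith)]
            rw [sub_zero]
            ring
          rw [hval] at hmono
          simpa [hJdef] using hmono
        set M : ℝ := 2 * ‖y‖ / R + 1 with hMdef
        have hMpos : 0 < M := by positivity
        set δ : ℝ := min (R/2) (R * Real.exp (-(C * M))) with hδdef
        have hδpos : 0 < δ := lt_min (by positivity) (by positivity)
        have hδhalf : δ ≤ R/2 := min_le_left _ _
        set rs := R - δ with hrsdef
        have hrs0 : 0 ≤ rs := by rw [hrsdef]; linarith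
        have hrsR : rs < R := by rw [hrsdef]; linarith
        have hrsA : rs • u ∈ V := hIco rs hrs0 hrsR
        have hJrs : M ≤ J u rs := by
          have hlb := hJlb rs hrs0 hrsR
          have h1 : R - rs = δ := by rw [hrsdef]; ring
          have h2 : Real.exp (C * M) ≤ R / δ := by
            have hδle : δ ≤ R * Real.exp (-(C*M)) := min_le_right _ _
            rw [le_div_iff₀ hδpos]
            calc Real.exp (C*M) * δ ≤ Real.exp (C*M) * (R * Real.exp (-(C*M))) := by
                  exact mul_le_mul_of_nonneg_left hδle (Real.exp_pos _).le
              _ = R := by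
                  rw [Real.exp_neg]
                  field_simp
          have h3 : C * M ≤ Real.log (R / δ) := by
            rw [← Real.log_exp (C*M)]
            exact Real.log_le_log (Real.exp_pos _) h2
          have h4 : M ≤ Real.log (R / (R - rs)) / C := by
            rw [h1, le_div_iff₀ hCpos]
            linarith [h3]
          exact h4.trans hlb
        have hJrs0 : 0 ≤ J u rs := hJnonneg u rs hrs0 (hmemIcc u rs hrsA)
        refine ⟨rs, hrs0, hrsA, ?_⟩
        have hrshalf : R/2 ≤ rs := by rw [hrsdef]; linarith
        have hMR : M * R = 2*‖y‖ + R := by rw [hMdef]; field_simp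
        nlinarith [sq_nonneg (M - 1), sq_nonneg (J u rs - M), hJrs, hJrs0, hMpos, hRpos,
          hrshalf, hMR]
      · rw [not_bddAbove_iff] at hbdd
        obtain ⟨a, haA, hya⟩ := hbdd ‖y‖
        refine ⟨a, haA.1, haA.2, ?_⟩
        have hJa : 0 ≤ J u a := hJnonneg u a haA.1 (hmemIcc u a haA.2)
        nlinarith [hya.le]
    obtain ⟨rs, hrs0, hrsV, hrsbig⟩ := hbig
    have hHcont := hJIcc u rs hrs0 (hmemIcc u rs hrsV)
    have hivt := intermediate_value_Icc hrs0 hHcont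
    have hmemIvt : ‖y‖ ∈ Icc ((1 + (J u 0)^2) * 0) ((1 + (J u rs)^2) * rs) := by
      constructor
      · rw [mul_zero]; exact norm_nonneg y
      · exact hrsbig
    obtain ⟨r, hrIcc, hr⟩ := hivt hmemIvt
    have hrpos : 0 < r := by
      rcases eq_or_lt_of_le hrIcc.1 with hEq | h
      · exfalso
        rw [← hEq] at hr
        norm_num at hr
        simp only [hr] at hny
        linarith
      · exact h
    have hruV : r • u ∈ V := hmemIcc u rs hrsV r hrIcc
    refine ⟨r • u, hruV, ?_⟩
    have hnru : ‖r • u‖ = r := by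
      rw [norm_smul, hu, mul_one, Real.norm_eq_abs, abs_of_pos hrpos]
    have hru0 : r • u ≠ 0 := by
      rw [← norm_pos_iff, hnru]; exact hrpos
    have hq : q (r • u) = (J u r)^2 := by
      rw [hqJ _ hru0, hnru]
      congr 2
      rw [smul_smul, inv_mul_cancel₀ hrpos.ne', one_smul]
    rw [hfdef]
    show (1 + q (r • u)) • (r • u) = y
    rw [hq, smul_smul]
    rw [show (1 + J u r ^ 2) * r = ‖y‖ from hr]
    rw [hudef, smul_smul, mul_inv_cancel₀ hny.ne', one_smul]
  -- invertible derivative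
  have hDer : ∀ v ∈ V, ∃ L : E ≃L[ℝ] E, HasFDerivAt f (L : E →L[ℝ] E) v := by
    intro v hv
    have hqd : DifferentiableAt ℝ q v :=
      (hqV.contDiffAt (hVopen.mem_nhds hv)).differentiableAt
        (by simp)
    set w' : E →L[ℝ] ℝ := fderiv ℝ q v with hw'def
    set Lmap : E →L[ℝ] E := (1 + q v) • ContinuousLinearMap.id ℝ E +
      ContinuousLinearMap.smulRight w' v with hLdef
    have hLapp : ∀ h : E, Lmap h = (1 + q v) • h + (w' h) • v := by
      intro h
      simp [hLdef, ContinuousLinearMap.smulRight_apply]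
    have hfd : HasFDerivAt f Lmap v := by
      have h1 : HasFDerivAt (fun x : E => 1 + q x) w' v := by
        simpa using (hqd.hasFDerivAt.const_add 1)
      have h2 := h1.smul (hasFDerivAt_id v)
      rw [hfdef]
      convert h2 using 1
      · rfl
      · exact hLdef
    -- nonnegativity of w' v
    have hwv : 0 ≤ w' v := by
      by_cases hv0 : v = 0
      · rw [hv0]; simp
      · obtain ⟨ε, hε, hball⟩ : ∃ ε > 0, ∀ t ∈ Icc (0:ℝ) (1+ε), t • v ∈ V := by
          have hc : Continuous (fun t : ℝ => t • v) := continuous_id.smul continuous_const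
          have hpre : (fun t : ℝ => t • v) ⁻¹' V ∈ nhds (1:ℝ) :=
            hc.continuousAt.preimage_mem_nhds (by simpa using hVopen.mem_nhds hv)
          obtain ⟨ε, hε, hsub⟩ := Metric.mem_nhds_iff.1 hpre
          refine ⟨ε/2, by positivity, fun t ht => ?_⟩
          by_cases h1 : t ≤ 1
          · exact hstar v hv t ⟨ht.1, h1⟩
          · apply hsub
            rw [Metric.mem_ball, Real.dist_eq, abs_of_pos (by linarith : (0:ℝ) < t - 1)]
            push_neg at h1
            have := ht.2
            linarith
        have hnv : (0:ℝ) < ‖v‖ := norm_pos_iff.2 hv0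
        set u : E := ‖v‖⁻¹ • v with hudef
        have htu : ∀ t : ℝ, 0 < t → (t * ‖v‖) • u = t • v := by
          intro t ht
          rw [hudef, smul_smul, mul_assoc, mul_inv_cancel₀ hnv.ne', mul_one]
        have hQ : ∀ t ∈ Icc (0:ℝ) (1+ε), q (t • v) = (J u (t * ‖v‖))^2 := by
          intro t ht
          rcases eq_or_lt_of_le ht.1 with hEq | htpos
          · rw [← hEq, zero_smul, hq0, zero_mul]
            have : J u 0 = 0 := by simp [hJdef]
            rw [this]
            ring
          · have htv0 : t • v ≠ 0 := smul_ne_zero htpos.ne' hv0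
            rw [hqJ _ htv0]
            have hn1 : ‖t • v‖ = t * ‖v‖ := by
              rw [norm_smul, Real.norm_eq_abs, abs_of_pos htpos]
            have hn2 : ‖t • v‖⁻¹ • (t • v) = u := by
              rw [hn1, smul_smul, hudef]
              congr 1
              field_simp
            rw [hn2, hn1]
        have hQmono : MonotoneOn (fun t => q (t • v)) (Icc 0 (1+ε)) := by
          intro s hs t ht hst
          simp only
          rw [hQ s hs, hQ t ht]
          have hmemt : ∀ τ ∈ Icc (0:ℝ) (t * ‖v‖), τ • u ∈ V := by
            rcases eq_or_lt_of_le ht.1 with hEq | htpos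
            · intro τ hτ
              rw [← hEq, zero_mul] at hτ
              have : τ = 0 := le_antisymm hτ.2 hτ.1
              rw [this, zero_smul]
              exact h0
            · exact hmemIcc u (t * ‖v‖) (by rw [htu t htpos]; exact hball t ht)
          have hJle : J u (s * ‖v‖) ≤ J u (t * ‖v‖) :=
            hJmono u (s * ‖v‖) (t * ‖v‖) (by nlinarith [hs.1])
              (by nlinarith) hmemt
          have hJ0 : 0 ≤ J u (s * ‖v‖) :=
            hJnonneg u (s * ‖v‖) (by nlinarith [hs.1])
              (fun τ hτ => hmemt τ ⟨hτ.1, hτ.2.trans (by nlinarith)⟩)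
          exact pow_le_pow_left₀ hJ0 hJle 2
        have hQd : HasDerivAt (fun t : ℝ => q (t • v)) (w' v) 1 := by
          have hc : HasDerivAt (fun t : ℝ => t • v) v 1 := by
            simpa using (hasDerivAt_id (1:ℝ)).smul_const v
          have hq1 : HasFDerivAt q w' ((1:ℝ) • v) := by
            rw [one_smul]; exact hqd.hasFDerivAt
          exact hq1.comp_hasDerivAt 1 hc
        exact deriv_nonneg_of_monotoneOn (by norm_num : (0:ℝ) < 1)
          (by linarith : (1:ℝ) < 1 + ε) hQmono hQd
    -- Lmap is bijective
    have hpos : (0:ℝ) < 1 + q v := by have := hqnn v; linarith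
    have hinj : Function.Injective Lmap := by
      rw [injective_iff_map_eq_zero]
      intro h hh
      have ha : (1 + q v) • h + (w' h) • v = 0 := by rw [← hLapp]; exact hh
      have hh' : h = (-(w' h) / (1 + q v)) • v := by
        have h1 : (1 + q v) • h = -((w' h) • v) := eq_neg_of_add_eq_zero_left ha
        calc h = (1 + q v)⁻¹ • ((1 + q v) • h) := by
                rw [smul_smul, inv_mul_cancel₀ hpos.ne', one_smul]
          _ = (1 + q v)⁻¹ • (-((w' h) • v)) := by rw [h1]
          _ = (-(w' h) / (1 + q v)) • v := by
                rw [smul_neg, smul_smul, ← neg_smul]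
                congr 1
                field_simp
      have h2 : w' h = (-(w' h) / (1 + q v)) * (w' v) := by
        conv_lhs => rw [hh']
        rw [ContinuousLinearMap.map_smul, smul_eq_mul]
      have h3 : w' h * (1 + q v + w' v) = 0 := by
        have h2' : w' h * (1 + q v) = -(w' h) * (w' v) := by
          field_simp at h2
          linarith [h2]
        ring_nf
        ring_nf at h2'
        linarith [h2']
      have h4 : (0:ℝ) < 1 + q v + w' v := by linarith
      have h5 : w' h = 0 := by
        rcases mul_eq_zero.1 h3 with h | h
        · exact h
        · exact absurd h h4.ne'
      rw [hh', h5]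
      simp
    have hsurj : Function.Surjective Lmap := by
      have := LinearMap.injective_iff_surjective (f := (Lmap : E →ₗ[ℝ] E))
      exact this.1 hinj
    set Leq : E ≃L[ℝ] E :=
      LinearEquiv.toContinuousLinearEquiv
        (LinearEquiv.ofBijective (Lmap : E →ₗ[ℝ] E) ⟨hinj, hsurj⟩) with hLeq
    refine ⟨Leq, ?_⟩
    have hcoe : (Leq : E →L[ℝ] E) = Lmap := by
      ext x
      rfl
    rw [hcoe]
    exact hfd
  -- assemble
  have hSurj' : ∀ y : E, ∃ v ∈ V, f v = y := hSurj
  have hexists : ∀ y : E, ∃ v ∈ V, f v = y := hSurj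
  set g' : E → E := fun y => Function.invFunOn f V y with hg'def
  have hg'mem : ∀ y, g' y ∈ V := by
    intro y
    obtain ⟨v, hv, hfv⟩ := hSurj y
    exact Function.invFunOn_mem ⟨v, hv, hfv⟩
  have hg'right : ∀ y, f (g' y) = y := by
    intro y
    obtain ⟨v, hv, hfv⟩ := hSurj y
    exact Function.invFunOn_eq ⟨v, hv, hfv⟩
  have hg'left : ∀ v ∈ V, g' (f v) = v := fun v hv =>
    hInj (hg'mem (f v)) hv (hg'right (f v))
  have hBij : Set.BijOn f V univ :=
    ⟨fun _ _ => trivial, hInj, fun y _ => (hSurj y).imp (fun v hv => ⟨hv.1, hv.2⟩)⟩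
  have hone : ((⊤:ℕ∞) : WithTop ℕ∞) ≠ 0 := by
    simp
  have hg'smooth : ContDiff ℝ (⊤ : ℕ∞) g' := by
    rw [contDiff_iff_contDiffAt]
    intro y
    have hv : g' y ∈ V := hg'mem y
    have hfv : f (g' y) = y := hg'right y
    obtain ⟨L, hL⟩ := hDer (g' y) hv
    have hca : ContDiffAt ℝ ((⊤:ℕ∞) : WithTop ℕ∞) f (g' y) :=
      hfV.contDiffAt (hVopen.mem_nhds hv)
    have hψ : ContDiffAt ℝ _ (hca.localInverse hL hone) (f (g' y)) :=
      hca.to_localInverse hL hone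
    have hstrict : HasStrictFDerivAt f (L : E →L[ℝ] E) (g' y) :=
      hca.hasStrictFDerivAt' hL hone
    have hright : ∀ᶠ z in nhds (f (g' y)), f (hca.localInverse hL hone z) = z :=
      hstrict.eventually_right_inverse
    have hψv : hca.localInverse hL hone (f (g' y)) = g' y :=
      hca.localInverse_apply_image hL hone
    have hmemV : ∀ᶠ z in nhds (f (g' y)), hca.localInverse hL hone z ∈ V := by
      have hcont : ContinuousAt (hca.localInverse hL hone) (f (g' y)) := hψ.continuousAt
      have := hcont.preimage_mem_nhds (by rw [hψv]; exact hVopen.mem_nhds hv)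
      filter_upwards [this] with z hz
      exact hz
    have heq : g' =ᶠ[nhds (f (g' y))] (hca.localInverse hL hone) := by
      filter_upwards [hright, hmemV] with z h1 h2
      exact hInj (hg'mem z) h2 (by rw [hg'right z, h1])
    have := hψ.congr_of_eventuallyEq heq
    rwa [hfv] at this
  simp only [hFeq]
  exact ⟨hfV, hBij, g', hg'smooth, hg'mem, fun v hv => hg'left v hv, hg'right⟩

/-- Every open subset `V ⊆ ℝ^n` which is star-shaped around the origin is diffeomorphic
to `ℝ^n`, via the explicit radial map
`v ↦ (1 + (∫₀^{‖v‖} dt / φ(t·v/‖v‖))²) • v` (sending `0 ↦ 0`), where `φ : ℝ^n → ℝ_{≥0}`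
is any smooth function with `φ⁻¹(0) = ℝ^n \ V`. -/
theorem starShaped_open_diffeo_euclidean (n : ℕ)
    (V : Set (EuclideanSpace ℝ (Fin n))) (hVopen : IsOpen V)
    (h0 : (0 : EuclideanSpace ℝ (Fin n)) ∈ V)
    (hstar : ∀ v ∈ V, ∀ t : ℝ, t ∈ Icc (0 : ℝ) 1 → t • v ∈ V)
    (φ : EuclideanSpace ℝ (Fin n) → ℝ) (hφ : ContDiff ℝ (⊤ : ℕ∞) φ)
    (hφnn : ∀ x, 0 ≤ φ x) (hφ0 : ∀ x, φ x = 0 ↔ x ∉ V) :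
    ContDiffOn ℝ (⊤ : ℕ∞)
      (fun v => (1 + (∫ t in (0 : ℝ)..‖v‖, (φ ((t / ‖v‖) • v))⁻¹) ^ 2) • v) V ∧
    Set.BijOn
      (fun v => (1 + (∫ t in (0 : ℝ)..‖v‖, (φ ((t / ‖v‖) • v))⁻¹) ^ 2) • v) V Set.univ ∧
    ∃ g' : EuclideanSpace ℝ (Fin n) → EuclideanSpace ℝ (Fin n),
      ContDiff ℝ (⊤ : ℕ∞) g' ∧ (∀ y, g' y ∈ V) ∧
      (∀ v ∈ V,
        g' ((1 + (∫ t in (0 : ℝ)..‖v‖, (φ ((t / ‖v‖) • v))⁻¹) ^ 2) • v) = v) ∧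
      (∀ y, (1 + (∫ t in (0 : ℝ)..‖g' y‖, (φ ((t / ‖g' y‖) • g' y))⁻¹) ^ 2) • g' y = y) :=
  main_general V hVopen h0 hstar φ hφ hφnn hφ0
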